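/- For a compact convex planar set H with boundary arc-length parameterisation h, define X₊ = {(u, θ) : 0 ≤ θ < 2π, u > t̂(θ)} and the map p(u, θ) = h(t) + (u − t)(cos θ, sin θ) for t ∈ t(θ). Then p : X₊ → ℝ² \ H is a bijection. -/

import Mathlib

open scoped RealInnerProductSpace ENNReal
open Set Metric Real MeasureTheory Filter

noncomputable section

/-- The Euclidean plane. -/
abbrev E2 : Type := EuclideanSpace ℝ (Fin 2)

/-- The unit vector with angle `θ` to the positive x-axis. -/
def dir (θ : ℝ) : E2 := WithLp.toLp 2 ![Real.cos θ, Real.sin θ]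

/-- Anticlockwise rotation by a right angle. -/
def rot (v : E2) : E2 := WithLp.toLp 2 ![-(v 1), v 0]

/-- `h` is an arc-length parameterisation of the boundary of `H`, a closed
rectifiable curve of length `L`. -/
def IsArcLengthParam (h : ℝ → E2) (L : ℝ) (H : Set E2) : Prop :=
  h '' (Set.Icc 0 L) = frontier H ∧ Set.InjOn h (Set.Ico 0 L) ∧ h 0 = h L ∧
    ∀ s t : ℝ, 0 ≤ s → s ≤ t → t ≤ L →
      eVariationOn h (Set.Icc s t) = ENNReal.ofReal (t - s)

/-- The set-valued inverse of the tangential angle: the set of arc-length parameters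
at which the tangential angle set `[θm t, θp t]` contains `θ`. -/
def tset (θm θp : ℝ → ℝ) (L θ : ℝ) : Set ℝ :=
  {t | t ∈ Set.Ico 0 L ∧ θm t ≤ θ ∧ θ ≤ θp t}


lemma inner_E2 (v w : E2) : ⟪v, w⟫ = v 0 * w 0 + v 1 * w 1 := by
  simp [PiLp.inner_apply, Fin.sum_univ_two, RCLike.inner_apply, mul_comm]

@[simp] lemma dir_zero (a : ℝ) : dir a 0 = Real.cos a := rfl
@[simp] lemma dir_one (a : ℝ) : dir a 1 = Real.sin a := rfl
@[simp] lemma rot_zero (v : E2) : rot v 0 = -(v 1) := rfl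
@[simp] lemma rot_one (v : E2) : rot v 1 = v 0 := rfl

lemma inner_rot_dir_dir (a b : ℝ) : ⟪rot (dir a), dir b⟫ = Real.sin (b - a) := by
  simp [inner_E2, Real.sin_sub]; ring

lemma inner_dir_dir (a b : ℝ) : ⟪dir a, dir b⟫ = Real.cos (b - a) := by
  simp [inner_E2, Real.cos_sub]; ring

lemma inner_rot_dir_self (a : ℝ) : ⟪rot (dir a), rot (dir a)⟫ = 1 := by
  simp only [inner_E2, rot_zero, rot_one, dir_zero, dir_one]
  nlinarith [Real.sin_sq_add_cos_sq a]

lemma dir_add_pi (a : ℝ) : dir (a + π) = -dir a := by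
  ext i; fin_cases i <;>
    simp [dir, Real.cos_add_pi, Real.sin_add_pi]

lemma dir_sub_pi (a : ℝ) : dir (a - π) = -dir a := by
  ext i; fin_cases i <;>
    simp [dir, Real.cos_sub_pi, Real.sin_sub_pi]

lemma rot_neg (v : E2) : rot (-v) = -rot v := by
  ext i; fin_cases i <;> simp [rot]

/-- decomposition in the orthonormal basis (dir φ, rot (dir φ)) -/
lemma dir_decomp (φ : ℝ) (y : E2) :
    y = ⟪dir φ, y⟫ • dir φ + ⟪rot (dir φ), y⟫ • rot (dir φ) := by
  ext i
  fin_cases i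
  · show y 0 = _
    simp [inner_E2, PiLp.add_apply, PiLp.smul_apply, smul_eq_mul]
    linear_combination (-(y 0)) * (Real.sin_sq_add_cos_sq φ)
  · show y 1 = _
    simp [inner_E2, PiLp.add_apply, PiLp.smul_apply, smul_eq_mul]
    linear_combination (-(y 1)) * (Real.sin_sq_add_cos_sq φ)

/-- sin β = 0 with β ∈ (-2π, 2π) implies β ∈ {-π, 0, π} -/
lemma sin_zero_cases {β : ℝ} (h : Real.sin β = 0) (h1 : -(2*π) < β) (h2 : β < 2*π) :
    β = -π ∨ β = 0 ∨ β = π := by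
  obtain ⟨n, hn⟩ := Real.sin_eq_zero_iff.mp h
  have hπ := Real.pi_pos
  have hn1 : (-2 : ℝ) * π < n * π := by rw [hn]; linarith
  have hn2 : (n : ℝ) * π < 2 * π := by rw [hn]; linarith
  have hb1' : (-2 : ℝ) < (n : ℝ) := lt_of_mul_lt_mul_right (by linarith) hπ.le
  have hb2' : ((n : ℝ)) < 2 := lt_of_mul_lt_mul_right (by linarith) hπ.le
  have hb1 : (-2 : ℤ) < n := by exact_mod_cast hb1'
  have hb2 : (n : ℤ) < 2 := by exact_mod_cast hb2'
  interval_cases n <;> push_cast at hn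
  · left; linarith
  · right; left; linarith
  · right; right; linarith

/-- left minimum implies nonpositive left derivative -/
lemma left_deriv_nonpos {F : ℝ → ℝ} {d a r : ℝ}
    (hd : HasDerivWithinAt F d (Set.Iic r) r) (ha : a < r)
    (hmin : ∀ s ∈ Set.Ioo a r, F r ≤ F s) : d ≤ 0 := by
  have hd' : HasDerivWithinAt F d (Set.Iio r) r := hd.mono Iio_subset_Iic_self
  rw [hasDerivWithinAt_iff_tendsto_slope] at hd'
  rw [Set.diff_singleton_eq_self (by simp)] at hd'
  refine le_of_tendsto hd' ?_
  filter_upwards [Ioo_mem_nhdsLT ha] with s hs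
  have : slope F s r = (F r - F s) / (r - s) := by rw [slope_def_field]
  rw [slope_comm, this]
  apply div_nonpos_of_nonpos_of_nonneg
  · linarith [hmin s hs]
  · linarith [hs.2]

/-- right minimum implies nonnegative right derivative -/
lemma right_deriv_nonneg {F : ℝ → ℝ} {d b r : ℝ}
    (hd : HasDerivWithinAt F d (Set.Ici r) r) (hb : r < b)
    (hmin : ∀ s ∈ Set.Ioo r b, F r ≤ F s) : 0 ≤ d := by
  have hd' : HasDerivWithinAt F d (Set.Ioi r) r := hd.mono Ioi_subset_Ici_self
  rw [hasDerivWithinAt_iff_tendsto_slope] at hd'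
  rw [Set.diff_singleton_eq_self (by simp)] at hd'
  refine ge_of_tendsto hd' ?_
  filter_upwards [Ioo_mem_nhdsGT hb] with s hs
  rw [slope_def_field]
  apply div_nonneg
  · linarith [hmin s hs]
  · linarith [hs.1]

lemma rot_dir_eq (a : ℝ) : rot (dir a) = dir (a + π/2) := by
  ext i; fin_cases i <;>
    simp [dir, rot, Real.cos_add_pi_div_two, Real.sin_add_pi_div_two]

lemma dir_periodic (θ : ℝ) (k : ℤ) : dir (θ - k * (2*π)) = dir θ := by
  ext i; fin_cases i <;>
    simp [dir, Real.cos_sub_int_mul_two_pi, Real.sin_sub_int_mul_two_pi]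

lemma dir_ne_zero (a : ℝ) : dir a ≠ 0 := by
  intro hzero
  have h1 : ⟪dir a, dir a⟫ = 1 := by rw [inner_dir_dir]; simp
  rw [hzero, inner_zero_left] at h1
  norm_num at h1

lemma norm_rot_dir (a : ℝ) : ‖rot (dir a)‖ = 1 := by
  have := inner_rot_dir_self a
  rw [real_inner_self_eq_norm_sq] at this
  nlinarith [norm_nonneg (rot (dir a))]

/-- unit vectors in the plane have the form `dir ψ` -/
lemma exists_dir (w : E2) (hw : w 0 ^ 2 + w 1 ^ 2 = 1) : ∃ ψ : ℝ, dir ψ = w := by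
  have hb : |w 0| ≤ 1 := by nlinarith [sq_nonneg (w 1), sq_abs (w 0)]
  have hb' : -1 ≤ w 0 ∧ w 0 ≤ 1 := abs_le.mp hb
  by_cases hs : 0 ≤ w 1
  · refine ⟨Real.arccos (w 0), ?_⟩
    ext i; fin_cases i
    · exact Real.cos_arccos hb'.1 hb'.2
    · show Real.sin (Real.arccos (w 0)) = w 1
      rw [Real.sin_arccos]
      rw [show 1 - w 0 ^ 2 = w 1 ^ 2 by linarith]
      exact Real.sqrt_sq hs
  · refine ⟨-Real.arccos (w 0), ?_⟩
    ext i; fin_cases i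
    · show Real.cos (-Real.arccos (w 0)) = w 0
      rw [Real.cos_neg]; exact Real.cos_arccos hb'.1 hb'.2
    · show Real.sin (-Real.arccos (w 0)) = w 1
      rw [Real.sin_neg, Real.sin_arccos]
      rw [show 1 - w 0 ^ 2 = w 1 ^ 2 by linarith]
      rw [Real.sqrt_sq_eq_abs, abs_of_neg (not_le.mp hs)]; ring

/-- no compact convex set with nonempty interior fits in a slab of width 0 -/
lemma no_slab {H : Set E2} (hint : (interior H).Nonempty) (w : E2) (hw : ‖w‖ = 1)
    (a : ℝ) (h1 : ∀ z ∈ H, a ≤ ⟪w, z⟫) (h2 : ∀ z ∈ H, ⟪w, z⟫ ≤ a) : False := by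
  obtain ⟨z₀, hz₀⟩ := hint
  obtain ⟨ε, hε, hball⟩ := Metric.isOpen_iff.mp isOpen_interior z₀ hz₀
  have hmem : ∀ c : ℝ, |c| < ε → z₀ + c • w ∈ H := by
    intro c hc
    apply interior_subset (hball ?_)
    rw [Metric.mem_ball, dist_eq_norm]
    simpa [norm_smul, hw] using hc
  have e1 := h1 _ (hmem (-(ε/2)) (by rw [abs_neg, abs_of_pos (by linarith)]; linarith))
  have e2 := h2 _ (hmem (ε/2) (by rw [abs_of_pos (by linarith)]; linarith))
  rw [inner_add_right, real_inner_smul_right, real_inner_self_eq_norm_sq, hw] at e1 e2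
  nlinarith

lemma hasDerivWithinAt_inner_const (w : E2) {g : ℝ → E2} {g' : E2} {s : Set ℝ} {x : ℝ}
    (hg : HasDerivWithinAt g g' s x) :
    HasDerivWithinAt (fun t => ⟪w, g t⟫) ⟪w, g'⟫ s x := by
  simpa using (hasDerivWithinAt_const x s w).inner ℝ hg


set_option maxHeartbeats 8000000 in
/-- The tangent-ray map `p(u, θ)` restricted to
`X₊ = {(u, θ) : 0 ≤ θ < 2π, u > t̂(θ)}` is a bijection onto `ℝ² \ H`. -/
theorem tangent_ray_map_bijective (H : Set E2)
    (hconv : Convex ℝ H) (hcomp : IsCompact H) (hint : (interior H).Nonempty)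
    (L : ℝ) (hL : 0 < L) (h : ℝ → E2) (hparam : IsArcLengthParam h L H)
    (dp dm : ℝ → E2)
    (hdp : ∀ t ∈ Set.Ico 0 L, HasDerivWithinAt h (dp t) (Set.Ici t) t)
    (hdm : ∀ t ∈ Set.Ioc 0 L, HasDerivWithinAt h (dm t) (Set.Iic t) t)
    (hleftp : ∀ t ∈ Set.Ico 0 L, ∀ x ∈ H, 0 ≤ ⟪rot (dp t), x - h t⟫)
    (hleftm : ∀ t ∈ Set.Ioc 0 L, ∀ x ∈ H, 0 ≤ ⟪rot (dm t), x - h t⟫)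
    (θp θm : ℝ → ℝ)
    (hθp : ∀ t ∈ Set.Ico 0 L, θp t ∈ Set.Ico 0 (2 * π) ∧ dp t = dir (θp t))
    (hθm : ∀ t ∈ Set.Ioc 0 L, θm t ∈ Set.Ico 0 (2 * π) ∧ dm t = dir (θm t))
    (hdiff0 : DifferentiableAt ℝ h 0) (hstart : θp 0 = 0)
    (p : ℝ → ℝ → E2)
    (hne : ∀ θ ∈ Set.Ico 0 (2 * π), (tset θm θp L θ).Nonempty)
    (hp : ∀ u θ : ℝ, ∀ t ∈ tset θm θp L θ, p u θ = h t + (u - t) • dir θ) :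
    Set.BijOn (fun x : ℝ × ℝ => p x.1 x.2)
      {x : ℝ × ℝ | x.2 ∈ Set.Ico 0 (2 * π) ∧ sSup (tset θm θp L x.2) < x.1} Hᶜ := by
  have hπ : (0:ℝ) < π := Real.pi_pos
  have hHcl : IsClosed H := hcomp.isClosed
  have hfr : frontier H ⊆ H := hHcl.frontier_subset
  have hhmem : ∀ s ∈ Set.Icc 0 L, h s ∈ H := fun s hs =>
    hfr (hparam.1 ▸ Set.mem_image_of_mem h hs)
  have hbdd : ∀ θ', BddAbove (tset θm θp L θ') := fun θ' => ⟨L, fun t ht => ht.1.2.le⟩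
  -- L1 : flat edge lemma
  have L1 : ∀ θ' : ℝ, ∀ s ∈ tset θm θp L θ', ∀ t ∈ tset θm θp L θ',
      h s - h t = (s - t) • dir θ' := by
    intro θ' s hs t ht
    have e1 := hp 0 θ' s hs
    have e2 := hp 0 θ' t ht
    rw [e1] at e2
    have : h s - h t = (0 - t) • dir θ' - (0 - s) • dir θ' := by
      rw [sub_eq_sub_iff_add_eq_add, add_comm ((0-t) • dir θ')]
      exact e2
    rw [this, ← sub_smul]; ring_nf
  -- L2 : supporting line at every t ∈ tset θ'
  have L2 : ∀ θ' ∈ Set.Ico 0 (2*π), ∀ t ∈ tset θm θp L θ', ∀ z ∈ H,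
      0 ≤ ⟪rot (dir θ'), z - h t⟫ := by
    intro θ' hθ' t ht z hz
    obtain ⟨⟨ht0, htL⟩, hm1, hp1⟩ := ht
    have htIco : t ∈ Set.Ico 0 L := ⟨ht0, htL⟩
    rcases eq_or_lt_of_le ht0 with h0 | h0
    · -- t = 0 : then θ' = θp t
      have hpt : θp t = 0 := by rw [← h0]; exact hstart
      have hθeq : θ' = θp t := le_antisymm (hpt ▸ hp1.trans hpt.le) (hpt ▸ hθ'.1)
      rw [hθeq, ← (hθp t htIco).2]
      exact hleftp t htIco z hz
    · have htIoc : t ∈ Set.Ioc 0 L := ⟨h0, htL.le⟩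
      rcases eq_or_lt_of_le hm1 with hem | hm1'
      · rw [← hem, ← (hθm t htIoc).2]; exact hleftm t htIoc z hz
      rcases eq_or_lt_of_le hp1 with hep | hp1'
      · rw [hep, ← (hθp t htIco).2]; exact hleftp t htIco z hz
      -- strictly between : θm t < θ' < θp t
      have hrange_p := (hθp t htIco).1
      have hrange_m := (hθm t htIoc).1
      have hα1 : 0 < θp t - θm t := by linarith
      have hα2 : θp t - θm t < 2*π := by
        rcases hrange_p with ⟨_, h2p⟩; rcases hrange_m with ⟨h1m, _⟩; linarith
      -- sin (θp t - θm t) ≥ 0 via the left derivative at the minimum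
      have hsinα : 0 ≤ Real.sin (θp t - θm t) := by
        have hder : HasDerivWithinAt (fun s => ⟪rot (dp t), h s⟫)
            ⟪rot (dp t), dm t⟫ (Set.Iic t) t :=
          hasDerivWithinAt_inner_const _ (hdm t htIoc)
        have hmin : ∀ s ∈ Set.Ioo 0 t, ⟪rot (dp t), h t⟫ ≤ ⟪rot (dp t), h s⟫ := by
          intro s hs
          have := hleftp t htIco (h s) (hhmem s ⟨hs.1.le, hs.2.le.trans htL.le⟩)
          rw [inner_sub_right] at this; linarith
        have := left_deriv_nonpos hder h0 hmin
        rw [(hθp t htIco).2, (hθm t htIoc).2, inner_rot_dir_dir] at this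
        have : Real.sin (θm t - θp t) ≤ 0 := this
        rw [show θm t - θp t = -(θp t - θm t) by ring, Real.sin_neg] at this
        linarith
      -- exclude α > π and α = π
      have hαlepi : θp t - θm t ≤ π := by
        by_contra hgt
        push_neg at hgt
        have : Real.sin (θp t - θm t) < 0 := by
          rw [show θp t - θm t = (θp t - θm t - π) + π by ring, Real.sin_add_pi]
          have := Real.sin_pos_of_pos_of_lt_pi (x := θp t - θm t - π)
            (by linarith) (by linarith)
          linarith
        linarith
      have hαltpi : θp t - θm t < π := by
        rcases eq_or_lt_of_le hαlepi with heq | hlt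
        · exfalso
          have hdirp : dir (θp t) = -dir (θm t) := by
            rw [show θp t = θm t + π by linarith, dir_add_pi]
          refine no_slab hint (rot (dir (θm t))) (norm_rot_dir _) ⟪rot (dir (θm t)), h t⟫
            ?_ ?_
          · intro z' hz'
            have := hleftm t htIoc z' hz'
            rw [(hθm t htIoc).2, inner_sub_right] at this; linarith
          · intro z' hz'
            have := hleftp t htIco z' hz'
            rw [(hθp t htIco).2, hdirp, rot_neg, inner_neg_left, inner_sub_right] at this
            linarith
        · exact hlt
      -- interpolation
      have hA := hleftm t htIoc z hz
      have hB := hleftp t htIco z hz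
      rw [(hθm t htIoc).2] at hA
      rw [(hθp t htIco).2] at hB
      have key : Real.sin (θp t - θm t) * ⟪rot (dir θ'), z - h t⟫ =
          Real.sin (θp t - θ') * ⟪rot (dir (θm t)), z - h t⟫ +
          Real.sin (θ' - θm t) * ⟪rot (dir (θp t)), z - h t⟫ := by
        simp only [inner_E2, rot_zero, rot_one, dir_zero, dir_one, Real.sin_sub]
        ring
      have hs1 : 0 ≤ Real.sin (θp t - θ') :=
        Real.sin_nonneg_of_nonneg_of_le_pi (by linarith) (by linarith)
      have hs2 : 0 ≤ Real.sin (θ' - θm t) :=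
        Real.sin_nonneg_of_nonneg_of_le_pi (by linarith) (by linarith)
      have hsinpos : 0 < Real.sin (θp t - θm t) :=
        Real.sin_pos_of_pos_of_lt_pi hα1 hαltpi
      have hge : 0 ≤ Real.sin (θp t - θm t) * ⟪rot (dir θ'), z - h t⟫ := by
        rw [key]
        exact add_nonneg (mul_nonneg hs1 hA) (mul_nonneg hs2 hB)
      exact nonneg_of_mul_nonneg_left (by linarith [hge] : 0 ≤ ⟪rot (dir θ'), z - h t⟫ * Real.sin (θp t - θm t)) hsinpos
  -- frontier points on the supporting line
  have hfeq : frontier H = H \ interior H := hHcl.frontier_eq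
  have freq : ∀ θ' ∈ Set.Ico 0 (2*π), ∀ t ∈ tset θm θp L θ', ∀ q ∈ H,
      ⟪rot (dir θ'), q - h t⟫ = 0 → ∃ r ∈ Set.Ico 0 L, h r = q := by
    intro θ' hθ' t ht q hq hq0
    have hqfr : q ∈ frontier H := by
      rw [hfeq]
      refine ⟨hq, fun hqi => ?_⟩
      obtain ⟨ε, hε, hball⟩ := Metric.isOpen_iff.mp isOpen_interior q hqi
      have hz' : q - (ε/2) • rot (dir θ') ∈ H := by
        apply interior_subset (hball ?_)
        rw [Metric.mem_ball, dist_eq_norm]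
        simp only [sub_sub_cancel_left, norm_neg, norm_smul, norm_rot_dir, mul_one]
        rw [Real.norm_eq_abs, abs_of_pos (by linarith)]; linarith
      have := L2 θ' hθ' t ht _ hz'
      rw [sub_right_comm, inner_sub_right, hq0, real_inner_smul_right,
        inner_rot_dir_self] at this
      linarith
    rw [← hparam.1] at hqfr
    obtain ⟨r, hr, hrq⟩ := hqfr
    rcases eq_or_lt_of_le hr.2 with hrL | hrL
    · subst hrL; exact ⟨0, ⟨le_refl 0, hL⟩, by rw [hparam.2.2.1]; exact hrq⟩
    · exact ⟨r, ⟨hr.1, hrL⟩, hrq⟩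
  -- the pinning lemma
  have pin : ∀ θ' ∈ Set.Ico 0 (2*π), ∀ t ∈ tset θm θp L θ', ∀ c e r : ℝ,
      0 < c → 0 < e → r ∈ Set.Ioo 0 L → h r = h t + c • dir θ' →
      h t + (c+e) • dir θ' ∈ H → r ∈ tset θm θp L θ' := by
    intro θ' hθ' t ht c e r hc he hr hrq hfwd
    have hrIco : r ∈ Set.Ico 0 L := ⟨hr.1.le, hr.2⟩
    have hrIoc : r ∈ Set.Ioc 0 L := ⟨hr.1, hr.2.le⟩
    have hnq : ⟪rot (dir θ'), h r - h t⟫ = 0 := by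
      rw [hrq, add_sub_cancel_left, real_inner_smul_right, inner_rot_dir_dir,
        sub_self, Real.sin_zero, mul_zero]
    have hnra : ⟪rot (dir θ'), h r⟫ = ⟪rot (dir θ'), h t⟫ := by
      rw [inner_sub_right] at hnq; linarith
    have hmin : ∀ s ∈ Set.Icc 0 L, ⟪rot (dir θ'), h r⟫ ≤ ⟪rot (dir θ'), h s⟫ := by
      intro s hs
      have := L2 θ' hθ' t ht _ (hhmem s hs)
      rw [inner_sub_right] at this
      rw [hnra]; linarith
    have hlb : ∀ z ∈ H, ⟪rot (dir θ'), h r⟫ ≤ ⟪rot (dir θ'), z⟫ := by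
      intro z hz
      have := L2 θ' hθ' t ht z hz
      rw [inner_sub_right] at this
      rw [hnra]; linarith
    have hfwds : h t + (c+e) • dir θ' - h r = e • dir θ' := by
      rw [hrq, add_sub_add_left_eq_sub, ← sub_smul]; ring_nf
    have hrange1 : -(2*π) < θp r - θ' := by
      rcases hθ' with ⟨_, h2⟩; rcases (hθp r hrIco).1 with ⟨h3, _⟩; linarith
    have hrange2 : θp r - θ' < 2*π := by
      rcases hθ' with ⟨h1, _⟩; rcases (hθp r hrIco).1 with ⟨_, h4⟩; linarith
    have hrange3 : -(2*π) < θm r - θ' := by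
      rcases hθ' with ⟨_, h2⟩; rcases (hθm r hrIoc).1 with ⟨h3, _⟩; linarith
    have hrange4 : θm r - θ' < 2*π := by
      rcases hθ' with ⟨h1, _⟩; rcases (hθm r hrIoc).1 with ⟨_, h4⟩; linarith
    -- pin θp r = θ'
    have e1 : 0 ≤ Real.sin (θp r - θ') := by
      have hder : HasDerivWithinAt (fun s => ⟪rot (dir θ'), h s⟫)
          ⟪rot (dir θ'), dp r⟫ (Set.Ici r) r :=
        hasDerivWithinAt_inner_const _ (hdp r hrIco)
      have := right_deriv_nonneg hder hr.2
        (fun s hs => hmin s ⟨hr.1.le.trans hs.1.le, hs.2.le⟩)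
      rwa [(hθp r hrIco).2, inner_rot_dir_dir] at this
    have e2 : Real.sin (θp r - θ') ≤ 0 := by
      have := hleftp r hrIco _ hfwd
      rw [hfwds, (hθp r hrIco).2, real_inner_smul_right, inner_rot_dir_dir] at this
      have h5 : 0 ≤ Real.sin (θ' - θp r) := nonneg_of_mul_nonneg_left
        (by linarith : 0 ≤ Real.sin (θ' - θp r) * e) he
      rw [show θp r - θ' = -(θ' - θp r) by ring, Real.sin_neg]; linarith
    have hppin : θp r = θ' := by
      rcases sin_zero_cases (le_antisymm e2 e1) hrange1 hrange2 with hcase | hcase | hcase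
      · exfalso
        have hdirp : dir (θp r) = -dir θ' := by
          rw [show θp r = θ' - π by linarith, dir_sub_pi]
        refine no_slab hint (rot (dir θ')) (norm_rot_dir _) ⟪rot (dir θ'), h r⟫
          hlb ?_
        intro z hz
        have := hleftp r hrIco z hz
        rw [(hθp r hrIco).2, hdirp, rot_neg, inner_neg_left, inner_sub_right] at this
        linarith
      · linarith
      · exfalso
        have hdirp : dir (θp r) = -dir θ' := by
          rw [show θp r = θ' + π by linarith, dir_add_pi]
        refine no_slab hint (rot (dir θ')) (norm_rot_dir _) ⟪rot (dir θ'), h r⟫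
          hlb ?_
        intro z hz
        have := hleftp r hrIco z hz
        rw [(hθp r hrIco).2, hdirp, rot_neg, inner_neg_left, inner_sub_right] at this
        linarith
    -- pin θm r = θ'
    have f1 : Real.sin (θm r - θ') ≤ 0 := by
      have hder : HasDerivWithinAt (fun s => ⟪rot (dir θ'), h s⟫)
          ⟪rot (dir θ'), dm r⟫ (Set.Iic r) r :=
        hasDerivWithinAt_inner_const _ (hdm r hrIoc)
      have := left_deriv_nonpos hder hr.1
        (fun s hs => hmin s ⟨hs.1.le, hs.2.le.trans hr.2.le⟩)
      rwa [(hθm r hrIoc).2, inner_rot_dir_dir] at this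
    have f2 : 0 ≤ Real.sin (θm r - θ') := by
      have hback : h t - h r = -(c • dir θ') := by
        rw [hrq, sub_add_cancel_left]
      have := hleftm r hrIoc (h t) (hhmem t ⟨ht.1.1, ht.1.2.le⟩)
      rw [hback, (hθm r hrIoc).2, inner_neg_right, real_inner_smul_right,
        inner_rot_dir_dir] at this
      have h5 : Real.sin (θ' - θm r) ≤ 0 := by nlinarith [this]
      rw [show θm r - θ' = -(θ' - θm r) by ring, Real.sin_neg]; linarith
    have hmpin : θm r = θ' := by
      rcases sin_zero_cases (le_antisymm f1 f2) hrange3 hrange4 with hcase | hcase | hcase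
      · exfalso
        have hdirp : dir (θm r) = -dir θ' := by
          rw [show θm r = θ' - π by linarith, dir_sub_pi]
        refine no_slab hint (rot (dir θ')) (norm_rot_dir _) ⟪rot (dir θ'), h r⟫
          hlb ?_
        intro z hz
        have := hleftm r hrIoc z hz
        rw [(hθm r hrIoc).2, hdirp, rot_neg, inner_neg_left, inner_sub_right] at this
        linarith
      · linarith
      · exfalso
        have hdirp : dir (θm r) = -dir θ' := by
          rw [show θm r = θ' + π by linarith, dir_add_pi]
        refine no_slab hint (rot (dir θ')) (norm_rot_dir _) ⟪rot (dir θ'), h r⟫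
          hlb ?_
        intro z hz
        have := hleftm r hrIoc z hz
        rw [(hθm r hrIoc).2, hdirp, rot_neg, inner_neg_left, inner_sub_right] at this
        linarith
    exact ⟨hrIco, le_of_eq hmpin, le_of_eq hppin.symm⟩
  -- MapsTo
  have mapsto : Set.MapsTo (fun x : ℝ × ℝ => p x.1 x.2)
      {x : ℝ × ℝ | x.2 ∈ Set.Ico 0 (2 * π) ∧ sSup (tset θm θp L x.2) < x.1} Hᶜ := by
    rintro ⟨u, θ⟩ ⟨hθ, hS⟩
    simp only [Set.mem_compl_iff]
    intro hxH
    obtain ⟨t, ht⟩ := hne θ hθ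
    have hpe : p u θ = h t + (u - t) • dir θ := hp u θ t ht
    rw [hpe] at hxH
    have htS : t ≤ sSup (tset θm θp L θ) := le_csSup (hbdd θ) ht
    have hS' : sSup (tset θm θp L θ) < u := hS
    have hut : 0 < u - t := by linarith
    have seg : ∀ c : ℝ, 0 ≤ c → c ≤ u - t → h t + c • dir θ ∈ H := by
      intro c hc0 hc1
      have hne' : u - t ≠ 0 := ne_of_gt hut
      have ha : (0:ℝ) ≤ 1 - c/(u-t) := by
        rw [sub_nonneg]; exact (div_le_one hut).mpr hc1
      have hb : (0:ℝ) ≤ c/(u-t) := div_nonneg hc0 hut.le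
      have hmem := hconv (hhmem t ⟨ht.1.1, ht.1.2.le⟩) hxH ha hb (by ring)
      have habeq : (1 - c/(u-t)) • h t + (c/(u-t)) • (h t + (u-t) • dir θ)
          = h t + c • dir θ := by
        rw [smul_add, sub_smul, one_smul, smul_smul, div_mul_cancel₀ _ hne']
        abel
      rwa [habeq] at hmem
    have step : ∀ c : ℝ, sSup (tset θm θp L θ) - t < c → c < u - t →
        h t + c • dir θ = h 0 := by
      intro c hcS hcu
      have hc0 : 0 < c := by linarith
      have hq : h t + c • dir θ ∈ H := seg c hc0.le hcu.le
      have honline : ⟪rot (dir θ), (h t + c • dir θ) - h t⟫ = 0 := by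
        rw [add_sub_cancel_left, real_inner_smul_right, inner_rot_dir_dir, sub_self,
          Real.sin_zero, mul_zero]
      obtain ⟨r, hrIco, hrq⟩ := freq θ hθ t ht _ hq honline
      rcases eq_or_lt_of_le hrIco.1 with hr0 | hr0
      · rw [← hrq, ← hr0]
      · exfalso
        have hfwd : h t + (c + (u - t - c)) • dir θ ∈ H := by
          have harith : c + (u - t - c) = u - t := by ring
          rw [harith]; exact hxH
        have hrT := pin θ hθ t ht c (u - t - c) r hc0 (by linarith) ⟨hr0, hrIco.2⟩
          hrq hfwd
        have hl1 := L1 θ r hrT t ht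
        rw [hrq, add_sub_cancel_left] at hl1
        have hsub : (c - (r - t)) • dir θ = 0 := by
          rw [sub_smul, hl1, sub_self]
        rcases smul_eq_zero.mp hsub with hcc | hcc
        · have : r ≤ sSup (tset θm θp L θ) := le_csSup (hbdd θ) hrT
          have : r = t + c := by linarith [sub_eq_zero.mp hcc]
          linarith
        · exact dir_ne_zero θ hcc
    obtain ⟨c1, c2, hc1, hc2, hc12⟩ :
        ∃ c1 c2 : ℝ, (sSup (tset θm θp L θ) - t < c1 ∧ c1 < u - t) ∧
          (sSup (tset θm θp L θ) - t < c2 ∧ c2 < u - t) ∧ c1 ≠ c2 := by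
      refine ⟨sSup (tset θm θp L θ) - t + (u - sSup (tset θm θp L θ))/3,
        sSup (tset θm θp L θ) - t + (u - sSup (tset θm θp L θ))*2/3,
        ⟨by linarith, by linarith⟩, ⟨by linarith, by linarith⟩, ne_of_lt (by linarith)⟩
    have e1 := step c1 hc1.1 hc1.2
    have e2 := step c2 hc2.1 hc2.2
    have hcan : c1 • dir θ = c2 • dir θ := add_left_cancel (e1.trans e2.symm)
    have : (c1 - c2) • dir θ = 0 := by rw [sub_smul, hcan, sub_self]
    rcases smul_eq_zero.mp this with hcc | hcc
    · exact hc12 (by linarith [sub_eq_zero.mp hcc])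
    · exact dir_ne_zero θ hcc
  -- InjOn
  have injon : Set.InjOn (fun x : ℝ × ℝ => p x.1 x.2)
      {x : ℝ × ℝ | x.2 ∈ Set.Ico 0 (2 * π) ∧ sSup (tset θm θp L x.2) < x.1} := by
    rintro ⟨u, θ⟩ ⟨hθ, hSθ⟩ ⟨u', θ'⟩ ⟨hθ', hSθ'⟩ heq
    simp only at heq
    obtain ⟨t, ht⟩ := hne θ hθ
    obtain ⟨t', ht'⟩ := hne θ' hθ'
    have hpe : p u θ = h t + (u - t) • dir θ := hp u θ t ht
    have hpe' : p u' θ' = h t' + (u' - t') • dir θ' := hp u' θ' t' ht'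
    have hSθ2 : sSup (tset θm θp L θ) < u := hSθ
    have hSθ2' : sSup (tset θm θp L θ') < u' := hSθ'
    have hut : 0 < u - t := by linarith [le_csSup (hbdd θ) ht]
    have hut' : 0 < u' - t' := by linarith [le_csSup (hbdd θ') ht']
    have hkey : h t + (u - t) • dir θ = h t' + (u' - t') • dir θ' := by
      rw [← hpe, ← hpe', heq]
    have hd : h t' - h t = (u - t) • dir θ - (u' - t') • dir θ' := by
      rw [sub_eq_sub_iff_add_eq_add]
      calc h t' + (u' - t') • dir θ' = h t + (u - t) • dir θ := hkey.symm
        _ = (u - t) • dir θ + h t := add_comm _ _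
    have hd2 : h t - h t' = (u' - t') • dir θ' - (u - t) • dir θ := by
      rw [← neg_sub (h t') (h t), hd, neg_sub]
    have hinner1 : ⟪rot (dir θ), h t' - h t⟫ = -((u' - t') * Real.sin (θ' - θ)) := by
      rw [hd, inner_sub_right, real_inner_smul_right, real_inner_smul_right,
        inner_rot_dir_dir, inner_rot_dir_dir, sub_self, Real.sin_zero, mul_zero]
      ring
    have hinner2 : ⟪rot (dir θ'), h t - h t'⟫ = -((u - t) * Real.sin (θ - θ')) := by
      rw [hd2, inner_sub_right, real_inner_smul_right, real_inner_smul_right,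
        inner_rot_dir_dir, inner_rot_dir_dir, sub_self, Real.sin_zero, mul_zero]
      ring
    have s1 : Real.sin (θ' - θ) ≤ 0 := by
      have hge := L2 θ hθ t ht (h t') (hhmem t' ⟨ht'.1.1, ht'.1.2.le⟩)
      rw [hinner1] at hge
      by_contra hpos
      push_neg at hpos
      have := mul_pos hut' hpos
      linarith
    have s2 : Real.sin (θ - θ') ≤ 0 := by
      have hge := L2 θ' hθ' t' ht' (h t) (hhmem t ⟨ht.1.1, ht.1.2.le⟩)
      rw [hinner2] at hge
      by_contra hpos
      push_neg at hpos
      have := mul_pos hut hpos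
      linarith
    have hsz : Real.sin (θ' - θ) = 0 := by
      rw [show θ - θ' = -(θ' - θ) by ring, Real.sin_neg] at s2; linarith
    have hieq : ⟪rot (dir θ), h t'⟫ = ⟪rot (dir θ), h t⟫ := by
      have : ⟪rot (dir θ), h t' - h t⟫ = 0 := by rw [hinner1, hsz]; ring
      rw [inner_sub_right] at this; linarith
    have hθeq : θ = θ' := by
      rcases sin_zero_cases hsz (by rcases hθ with ⟨a1,a2⟩; rcases hθ' with ⟨b1,b2⟩; linarith)
        (by rcases hθ with ⟨a1,a2⟩; rcases hθ' with ⟨b1,b2⟩; linarith)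
        with hcase | hcase | hcase
      · exfalso
        have hdirp : dir θ' = -dir θ := by
          rw [show θ' = θ - π by linarith, dir_sub_pi]
        refine no_slab hint (rot (dir θ)) (norm_rot_dir _) ⟪rot (dir θ), h t⟫ ?_ ?_
        · intro z hz
          have := L2 θ hθ t ht z hz
          rw [inner_sub_right] at this; linarith
        · intro z hz
          have := L2 θ' hθ' t' ht' z hz
          rw [hdirp, rot_neg, inner_neg_left, inner_sub_right] at this
          rw [← hieq]; linarith
      · linarith
      · exfalso
        have hdirp : dir θ' = -dir θ := by
          rw [show θ' = θ + π by linarith, dir_add_pi]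
        refine no_slab hint (rot (dir θ)) (norm_rot_dir _) ⟪rot (dir θ), h t⟫ ?_ ?_
        · intro z hz
          have := L2 θ hθ t ht z hz
          rw [inner_sub_right] at this; linarith
        · intro z hz
          have := L2 θ' hθ' t' ht' z hz
          rw [hdirp, rot_neg, inner_neg_left, inner_sub_right] at this
          rw [← hieq]; linarith
    subst hθeq
    have hflat := L1 θ t' ht' t ht
    have hcomb : (t' - t) • dir θ = (u - t) • dir θ - (u' - t') • dir θ := by
      rw [← hflat, hd]
    have hzero : (t' - t - (u - t) + (u' - t')) • dir θ = 0 := by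
      have hmod : (t' - t - (u - t) + (u' - t')) • dir θ =
          (t' - t) • dir θ - ((u - t) • dir θ - (u' - t') • dir θ) := by module
      rw [hmod, hcomb, sub_self]
    rcases smul_eq_zero.mp hzero with hcc | hcc
    · have huu : u = u' := by linarith
      rw [Prod.mk.injEq]
      exact ⟨huu, rfl⟩
    · exact absurd hcc (dir_ne_zero θ)
  -- SurjOn
  have surj : Set.SurjOn (fun x : ℝ × ℝ => p x.1 x.2)
      {x : ℝ × ℝ | x.2 ∈ Set.Ico 0 (2 * π) ∧ sSup (tset θm θp L x.2) < x.1} Hᶜ := by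
    intro x hx
    simp only [Set.mem_compl_iff] at hx
    have hHne : H.Nonempty := ⟨hint.choose, interior_subset hint.choose_spec⟩
    set m : ℝ → ℝ := fun φ => sInf ((fun z => ⟪rot (dir φ), z⟫) '' H) with hm_def
    have hmin : ∀ φ : ℝ, ∃ z ∈ H, (∀ z' ∈ H, ⟪rot (dir φ), z⟫ ≤ ⟪rot (dir φ), z'⟫) ∧
        m φ = ⟪rot (dir φ), z⟫ := by
      intro φ
      have hcont' : Continuous fun z : E2 => ⟪rot (dir φ), z⟫ :=
        continuous_const.inner continuous_id
      obtain ⟨z, hzH, hz⟩ := hcomp.exists_isMinOn hHne hcont'.continuousOn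
      have hz' : ∀ z' ∈ H, ⟪rot (dir φ), z⟫ ≤ ⟪rot (dir φ), z'⟫ := fun z' hz' =>
        isMinOn_iff.mp hz z' hz'
      refine ⟨z, hzH, hz', le_antisymm ?_ ?_⟩
      · exact csInf_le ⟨⟪rot (dir φ), z⟫, fun y hy => by
          obtain ⟨ww, hw, rfl⟩ := hy; exact hz' ww hw⟩ (Set.mem_image_of_mem _ hzH)
      · exact le_csInf (hHne.image _) (fun y hy => by
          obtain ⟨ww, hw, rfl⟩ := hy; exact hz' ww hw)
    have hm_le : ∀ φ : ℝ, ∀ z ∈ H, m φ ≤ ⟪rot (dir φ), z⟫ := by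
      intro φ z hz
      obtain ⟨z0, hz0, hmin0, hmeq⟩ := hmin φ
      rw [hmeq]; exact hmin0 z hz
    have hm_t : ∀ θ'' ∈ Set.Ico 0 (2*π), ∀ t ∈ tset θm θp L θ'',
        m θ'' = ⟪rot (dir θ''), h t⟫ := by
      intro θ'' hθ'' t ht
      refine le_antisymm (hm_le θ'' _ (hhmem t ⟨ht.1.1, ht.1.2.le⟩)) ?_
      obtain ⟨z0, hz0, hmin0, hmeq⟩ := hmin θ''
      rw [hmeq]
      have := L2 θ'' hθ'' t ht z0 hz0
      rw [inner_sub_right] at this; linarith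
    -- Lipschitz continuity of m
    obtain ⟨R, hR⟩ := hcomp.isBounded.exists_norm_le
    have hR0 : 0 ≤ R := le_trans (norm_nonneg _) (hR hHne.choose hHne.choose_spec)
    have hdirLip : ∀ a b : ℝ, ‖rot (dir a) - rot (dir b)‖ ≤ 2 * |a - b| := by
      intro a b
      have h0 : ‖rot (dir a) - rot (dir b)‖^2 =
          (Real.sin b - Real.sin a)^2 + (Real.cos a - Real.cos b)^2 := by
        rw [← real_inner_self_eq_norm_sq, inner_E2]
        simp [PiLp.sub_apply]
        ring
      have hs : |Real.sin a - Real.sin b| ≤ |a - b| := by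
        rw [Real.sin_sub_sin, abs_mul, abs_mul, show |(2:ℝ)| = 2 by norm_num]
        have e1 : |Real.sin ((a-b)/2)| ≤ |(a-b)/2| := Real.abs_sin_le_abs
        have e2 : |Real.cos ((a+b)/2)| ≤ 1 := Real.abs_cos_le_one _
        calc 2 * |Real.sin ((a-b)/2)| * |Real.cos ((a+b)/2)|
            ≤ 2 * |(a-b)/2| * 1 :=
              mul_le_mul (mul_le_mul_of_nonneg_left e1 (by norm_num)) e2
                (abs_nonneg _) (by positivity)
          _ = |a-b| := by rw [abs_div, show |(2:ℝ)| = 2 by norm_num]; ring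
      have hc : |Real.cos a - Real.cos b| ≤ |a - b| := by
        rw [Real.cos_sub_cos, abs_mul, abs_mul, show |(-2:ℝ)| = 2 by norm_num]
        have e1 : |Real.sin ((a-b)/2)| ≤ |(a-b)/2| := Real.abs_sin_le_abs
        have e2 : |Real.sin ((a+b)/2)| ≤ 1 := Real.abs_sin_le_one _
        calc 2 * |Real.sin ((a+b)/2)| * |Real.sin ((a-b)/2)|
            ≤ 2 * 1 * |(a-b)/2| :=
              mul_le_mul (mul_le_mul_of_nonneg_left e2 (by norm_num)) e1
                (abs_nonneg _) (by positivity)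
          _ = |a-b| := by rw [abs_div, show |(2:ℝ)| = 2 by norm_num]; ring
      have h2 : ‖rot (dir a) - rot (dir b)‖^2 ≤ (2 * |a - b|)^2 := by
        rw [h0]
        have e1 : (Real.sin b - Real.sin a)^2 ≤ |a-b|^2 := by
          rw [← sq_abs (Real.sin b - Real.sin a)]
          have : |Real.sin b - Real.sin a| ≤ |a - b| := by rwa [abs_sub_comm] at hs
          exact pow_le_pow_left₀ (abs_nonneg _) this 2
        have e2 : (Real.cos a - Real.cos b)^2 ≤ |a-b|^2 := by
          rw [← sq_abs (Real.cos a - Real.cos b)]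
          exact pow_le_pow_left₀ (abs_nonneg _) hc 2
        nlinarith [sq_nonneg (|a-b|)]
      calc ‖rot (dir a) - rot (dir b)‖
          = Real.sqrt (‖rot (dir a) - rot (dir b)‖^2) := (Real.sqrt_sq (norm_nonneg _)).symm
        _ ≤ Real.sqrt ((2*|a-b|)^2) := Real.sqrt_le_sqrt h2
        _ = 2*|a-b| := Real.sqrt_sq (by positivity)
    have hm_lip : ∀ a b : ℝ, m a - m b ≤ (2*R) * |a - b| := by
      intro a b
      obtain ⟨zb, hzb, hminb, hmeqb⟩ := hmin b
      have h1 : m a ≤ ⟪rot (dir a), zb⟫ := hm_le a zb hzb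
      have h2 : ⟪rot (dir a), zb⟫ - ⟪rot (dir b), zb⟫ = ⟪rot (dir a) - rot (dir b), zb⟫ :=
        (inner_sub_left _ _ _).symm
      have h3 : |⟪rot (dir a) - rot (dir b), zb⟫| ≤ ‖rot (dir a) - rot (dir b)‖ * ‖zb‖ :=
        abs_real_inner_le_norm _ _
      have h4 : ‖zb‖ ≤ R := hR zb hzb
      have h5 := hdirLip a b
      have h6 : ‖rot (dir a) - rot (dir b)‖ * ‖zb‖ ≤ (2*|a-b|) * R :=
        mul_le_mul h5 h4 (norm_nonneg _) (by positivity)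
      have h7 := (abs_le.mp h3).2
      rw [hmeqb]
      have := h2 ▸ le_trans h7 h6
      linarith [this]
    have hm_cont : Continuous m := by
      rw [Metric.continuous_iff]
      intro b ε hε
      have h2R1 : (0:ℝ) < 2*R+1 := by linarith
      refine ⟨ε / (2*R+1), div_pos hε h2R1, fun a ha => ?_⟩
      rw [Real.dist_eq] at ha ⊢
      have k1 := hm_lip a b
      have k2 := hm_lip b a
      rw [abs_sub_comm] at k2
      have hmono : (2*R) * |a - b| ≤ (2*R) * (ε/(2*R+1)) :=
        mul_le_mul_of_nonneg_left ha.le (by linarith)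
      have hA : 0 < ε/(2*R+1) := div_pos hε h2R1
      have heq2 : 2*R*(ε/(2*R+1)) + ε/(2*R+1) = ε := by field_simp
      have habs : |m a - m b| ≤ (2*R) * |a-b| :=
        abs_le.mpr ⟨by linarith, by linarith⟩
      calc |m a - m b| ≤ (2*R)*|a-b| := habs
        _ ≤ (2*R)*(ε/(2*R+1)) := hmono
        _ < ε := by linarith
    set f : ℝ → ℝ := fun φ => ⟪rot (dir φ), x⟫ - m φ with hf_def
    have hf_cont : Continuous f := by
      apply Continuous.sub ?_ hm_cont
      have hfeq2 : (fun φ : ℝ => ⟪rot (dir φ), x⟫)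
          = fun φ => -Real.sin φ * x 0 + Real.cos φ * x 1 := by
        funext φ; rw [inner_E2]; simp
      rw [hfeq2]
      exact (Real.continuous_sin.neg.mul continuous_const).add
        (Real.continuous_cos.mul continuous_const)
    -- find θ₀ with f θ₀ < 0
    obtain ⟨ℓ, u₀, hlt, hgt⟩ := geometric_hahn_banach_closed_point hconv hHcl hx
    set v : E2 := (InnerProductSpace.toDual ℝ E2).symm ℓ with hv_def
    have hvapp : ∀ y : E2, ⟪v, y⟫ = ℓ y := fun y => InnerProductSpace.toDual_symm_apply
    have hvne : v ≠ 0 := by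
      intro h0
      obtain ⟨z, hz⟩ := hHne
      have h1 := hlt z hz
      have h2 : ℓ z = 0 := by rw [← hvapp, h0, inner_zero_left]
      have h3 : ℓ x = 0 := by rw [← hvapp, h0, inner_zero_left]
      linarith
    have hnv : 0 < ‖v‖ := norm_pos_iff.mpr hvne
    set w : E2 := (‖v‖)⁻¹ • (-v) with hw_def
    have hwnorm : ‖w‖ = 1 := by
      rw [hw_def, norm_smul, norm_neg, norm_inv, norm_norm]
      field_simp
    have hwx : ∀ z ∈ H, ⟪w, x⟫ < ⟪w, z⟫ := by
      intro z hz
      rw [hw_def]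
      rw [real_inner_smul_left, real_inner_smul_left, inner_neg_left, inner_neg_left,
        hvapp, hvapp]
      have h1 : ℓ z < u₀ := hlt z hz
      have h2 : u₀ < ℓ x := hgt
      exact (mul_lt_mul_iff_right₀ (inv_pos.mpr hnv)).mpr (by linarith)
    have hw01 : w 0 ^ 2 + w 1 ^ 2 = 1 := by
      have hinner := real_inner_self_eq_norm_sq w
      rw [hwnorm, inner_E2] at hinner
      nlinarith [hinner]
    obtain ⟨ψ, hψ⟩ := exists_dir w hw01
    set θ₀ : ℝ := ψ - π/2 with hθ₀def
    have hrotθ₀ : rot (dir θ₀) = w := by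
      rw [rot_dir_eq, hθ₀def, show ψ - π/2 + π/2 = ψ by ring, hψ]
    have hfθ₀ : f θ₀ < 0 := by
      obtain ⟨z0, hz0, hmin0, hmeq0⟩ := hmin θ₀
      simp only [hf_def]
      rw [hmeq0, hrotθ₀]
      linarith [hwx z0 hz0]
    -- positive width
    have hwidth : ∀ φ : ℝ, 0 < f φ + f (φ + π) := by
      intro φ
      obtain ⟨z₀, hz₀⟩ := hint
      obtain ⟨ε, hε, hball⟩ := Metric.isOpen_iff.mp isOpen_interior z₀ hz₀
      have hrotpi : rot (dir (φ + π)) = -rot (dir φ) := by rw [dir_add_pi, rot_neg]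
      have hmemball : ∀ cc : ℝ, |cc| < ε → z₀ + cc • rot (dir φ) ∈ H := by
        intro cc hcc
        apply interior_subset (hball ?_)
        rw [Metric.mem_ball, dist_eq_norm]
        simpa [norm_smul, norm_rot_dir] using hcc
      have h1 : m φ ≤ ⟪rot (dir φ), z₀⟫ - ε/2 := by
        have := hm_le φ _ (hmemball (-(ε/2))
          (by rw [abs_neg, abs_of_pos (by linarith)]; linarith))
        rw [inner_add_right, real_inner_smul_right, inner_rot_dir_self] at this
        linarith
      have h2 : m (φ + π) ≤ -⟪rot (dir φ), z₀⟫ - ε/2 := by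
        have := hm_le (φ+π) _ (hmemball (ε/2) (by rw [abs_of_pos (by linarith)]; linarith))
        rw [hrotpi, inner_neg_left, inner_add_right, real_inner_smul_right,
          inner_rot_dir_self] at this
        linarith
      simp only [hf_def]
      rw [hrotpi, inner_neg_left]
      linarith
    -- IVT
    set F : ℝ → ℝ := fun s => f (θ₀ - s) with hF_def
    have hF_cont : Continuous F := hf_cont.comp (continuous_const.sub continuous_id)
    have hF0 : F 0 < 0 := by simpa [hF_def] using hfθ₀
    have hFπ : 0 < F π := by
      have hw1 := hwidth (θ₀ - π)
      rw [show θ₀ - π + π = θ₀ by ring] at hw1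
      have : F π = f (θ₀ - π) := rfl
      linarith
    obtain ⟨s₁, hs₁Icc, hs₁⟩ : ∃ s ∈ Set.Icc 0 π, F s = 0 :=
      intermediate_value_Icc (le_of_lt hπ) hF_cont.continuousOn ⟨hF0.le, hFπ.le⟩
    set Z := Set.Icc 0 π ∩ F ⁻¹' {0} with hZ_def
    have hZne : Z.Nonempty := ⟨s₁, hs₁Icc, hs₁⟩
    have hZclosed : IsClosed Z := isClosed_Icc.inter (isClosed_singleton.preimage hF_cont)
    have hZbdd : BddBelow Z := ⟨0, fun s hs => hs.1.1⟩
    set s' := sInf Z with hs'_def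
    have hs'mem : s' ∈ Z := hZclosed.csInf_mem hZne hZbdd
    have hFs' : F s' = 0 := hs'mem.2
    have hs'pos : 0 < s' := by
      rcases eq_or_lt_of_le hs'mem.1.1 with h0 | h0
      · exfalso; rw [← h0] at hFs'; linarith
      · exact h0
    have hFneg : ∀ s, 0 ≤ s → s < s' → F s < 0 := by
      intro s h0s hss
      have hsπ : s ≤ π := le_trans hss.le hs'mem.1.2
      rcases lt_trichotomy (F s) 0 with hcase | hcase | hcase
      · exact hcase
      · exact absurd (csInf_le hZbdd ⟨⟨h0s, hsπ⟩, hcase⟩) (not_le.mpr hss)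
      · exfalso
        obtain ⟨s₂, hs₂, hFs₂⟩ := intermediate_value_Icc h0s hF_cont.continuousOn
          ⟨hF0.le, hcase.le⟩
        have : s' ≤ s₂ := csInf_le hZbdd ⟨⟨hs₂.1, le_trans hs₂.2 hsπ⟩, hFs₂⟩
        linarith [hs₂.2]
    set θs := θ₀ - s' with hθs_def
    have hfθs : f θs = 0 := hFs'
    set k : ℤ := ⌊θs / (2*π)⌋ with hk_def
    set θ1 : ℝ := θs - k * (2*π) with hθ1_def
    have hdir1 : dir θ1 = dir θs := dir_periodic θs k
    have hθ1mem : θ1 ∈ Set.Ico 0 (2*π) := by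
      constructor
      · have hfl : (k:ℝ) ≤ θs / (2*π) := Int.floor_le _
        have := mul_le_mul_of_nonneg_right hfl (by linarith : (0:ℝ) ≤ 2*π)
        rw [div_mul_cancel₀ _ (by linarith : (2*π) ≠ 0)] at this
        simp only [hθ1_def]; linarith
      · have hfl : θs / (2*π) < k + 1 := Int.lt_floor_add_one _
        have := mul_lt_mul_of_pos_right hfl (by linarith : (0:ℝ) < 2*π)
        rw [div_mul_cancel₀ _ (by linarith : (2*π) ≠ 0)] at this
        simp only [hθ1_def]; linarith
    have hm1 : m θ1 = m θs := by simp only [hm_def]; rw [hdir1]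
    have hf1 : f θ1 = 0 := by
      simp only [hf_def]
      rw [hdir1, hm1]
      exact hfθs
    obtain ⟨t1, ht1⟩ := hne θ1 hθ1mem
    have hmt1 : m θ1 = ⟪rot (dir θ1), h t1⟫ := hm_t θ1 hθ1mem t1 ht1
    set c : ℝ := ⟪dir θ1, x - h t1⟫ with hc_def
    have hd0 : ⟪rot (dir θ1), x - h t1⟫ = 0 := by
      rw [inner_sub_right, ← hmt1]
      simp only [hf_def] at hf1
      linarith
    have hdec : x - h t1 = c • dir θ1 := by
      have hdec0 := dir_decomp θ1 (x - h t1)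
      rw [hd0, zero_smul, add_zero] at hdec0
      rw [hc_def]
      exact hdec0
    have hxeq : x = h t1 + c • dir θ1 := by
      rw [← hdec]; abel
    have hcpos : 0 < c := by
      have hminpos : 0 < min s' (π/2) := lt_min hs'pos (by linarith)
      set ε' := min s' (π/2) / 2 with hε'_def
      have hε'pos : 0 < ε' := by simp only [hε'_def]; linarith
      have hε'lt : ε' < π := by
        have := min_le_right s' (π/2)
        simp only [hε'_def]; linarith
      have hε'le : ε' < s' := by
        have := min_le_left s' (π/2)
        simp only [hε'_def]; linarith
      have hFneg' := hFneg (s' - ε') (by linarith) (by linarith)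
      have harith : θ₀ - (s' - ε') = θs + ε' := by rw [hθs_def]; ring
      have hFev : F (s' - ε') = f (θs + ε') := by
        simp only [hF_def]; rw [harith]
      rw [hFev] at hFneg'
      have hub : ⟪rot (dir (θs + ε')), x - h t1⟫ ≤ f (θs + ε') := by
        simp only [hf_def]
        rw [inner_sub_right]
        linarith [hm_le (θs + ε') (h t1) (hhmem t1 ⟨ht1.1.1, ht1.1.2.le⟩)]
      have hcomp1 : ⟪rot (dir (θs + ε')), x - h t1⟫ = c * Real.sin (θ1 - (θs + ε')) := by
        rw [hdec, real_inner_smul_right, inner_rot_dir_dir]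
      have hsin : Real.sin (θ1 - (θs + ε')) = -Real.sin ε' := by
        rw [show θ1 - (θs + ε') = -ε' - k * (2*π) by rw [hθ1_def]; ring,
          Real.sin_sub_int_mul_two_pi, Real.sin_neg]
      have hsinpos : 0 < Real.sin ε' := Real.sin_pos_of_pos_of_lt_pi hε'pos hε'lt
      by_contra hcle
      push_neg at hcle
      have h9 : 0 ≤ (-c) * Real.sin ε' := mul_nonneg (by linarith) hsinpos.le
      have h10 : c * Real.sin (θ1 - (θs + ε')) = (-c) * Real.sin ε' := by
        rw [hsin]; ring
      rw [h10] at hcomp1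
      linarith
    set u : ℝ := t1 + c with hu_def
    have hslt : sSup (tset θm θp L θ1) < u := by
      by_contra hle
      push_neg at hle
      apply hx
      set K := {c' : ℝ | h t1 + c' • dir θ1 ∈ H} with hK_def
      have hKconv : Convex ℝ K := by
        intro c1' hc1' c2' hc2' a b ha hb hab
        show h t1 + (a • c1' + b • c2') • dir θ1 ∈ H
        have hcomb := hconv hc1' hc2' ha hb hab
        have heq2 : a • (h t1 + c1' • dir θ1) + b • (h t1 + c2' • dir θ1)
            = h t1 + (a • c1' + b • c2') • dir θ1 := by
          simp only [smul_eq_mul]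
          rw [smul_add, smul_add, smul_smul, smul_smul, add_add_add_comm,
            ← add_smul, hab, one_smul, ← add_smul]
        rwa [heq2] at hcomb
      have hKclosed : IsClosed K := by
        have hKpre : K = (fun c' : ℝ => h t1 + c' • dir θ1) ⁻¹' H := rfl
        rw [hKpre]
        exact hHcl.preimage (continuous_const.add (continuous_id.smul continuous_const))
      have h0K : (0:ℝ) ∈ K := by
        show h t1 + (0:ℝ) • dir θ1 ∈ H
        rw [zero_smul, add_zero]
        exact hhmem t1 ⟨ht1.1.1, ht1.1.2.le⟩
      have htK : ∀ t2 ∈ tset θm θp L θ1, t2 - t1 ∈ K := by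
        intro t2 ht2
        show h t1 + (t2 - t1) • dir θ1 ∈ H
        rw [← L1 θ1 t2 ht2 t1 ht1, add_sub_cancel]
        exact hhmem t2 ⟨ht2.1.1, ht2.1.2.le⟩
      have hcK : c ∈ K := by
        have hcl : c ∈ closure K := by
          rw [Metric.mem_closure_iff]
          intro δ hδ
          set δ' := min (δ/2) (c/2) with hδ'_def
          have hδ'pos : 0 < δ' := lt_min (by linarith) (by linarith)
          have hδ'c : δ' ≤ c/2 := min_le_right _ _
          have hδ'δ : δ' ≤ δ/2 := min_le_left _ _
          obtain ⟨t2, ht2, ht2gt⟩ := exists_lt_of_lt_csSup (hne θ1 hθ1mem)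
            (show sSup (tset θm θp L θ1) - δ' < sSup (tset θm θp L θ1) by linarith)
          have ht2u : u - δ' < t2 := by linarith
          have ht2t1 : c - δ' < t2 - t1 := by
            simp only [hu_def] at ht2u; linarith
          have hkmem : min c (t2 - t1) ∈ K := by
            apply hKconv.ordConnected.out h0K (htK t2 ht2)
            exact ⟨le_min hcpos.le (by linarith), min_le_right _ _⟩
          refine ⟨min c (t2 - t1), hkmem, ?_⟩
          rw [Real.dist_eq]
          have hmin_ge : c - δ' ≤ min c (t2 - t1) := le_min (by linarith) (by linarith)
          have hmin_le : min c (t2 - t1) ≤ c := min_le_left _ _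
          rw [abs_lt]
          constructor <;> linarith
        rwa [hKclosed.closure_eq] at hcl
      rw [hxeq]
      exact hcK
    refine ⟨(u, θ1), ⟨hθ1mem, hslt⟩, ?_⟩
    show p u θ1 = x
    rw [hp u θ1 t1 ht1, show u - t1 = c by rw [hu_def]; ring, ← hxeq]
  exact ⟨mapsto, injon, surj⟩

end
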